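/- arXiv:1511.09301 — 2 statements merged into one kernel-verified Lean document; each statement's English description precedes it below -/
import Mathlib

section
/- Let A be a set, S and T subsets of A, and s', t' non-negative integers. Then there exist subsets S' and T' of A with |S'| = s', |T'| = t', S ∩ S' = ∅, T ∩ T' = ∅, and S' ∩ T' = ∅ if and only if (i) |S ∩ T| + s' + t' ≤ |A|, (ii) |S| + s' ≤ |A|, and (iii) |T| + t' ≤ |A|. -/
/-- Horsley's set-relabeling theorem: existence of disjoint subsets `S'`, `T'` of `A`
of prescribed sizes avoiding `S` and `T` respectively, iff three counting conditions hold. -/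
theorem setsAndRelabeling {α : Type*} [DecidableEq α] (A S T : Finset α)
    (hS : S ⊆ A) (hT : T ⊆ A) (s' t' : ℕ) :
    (∃ S' T' : Finset α, S' ⊆ A ∧ T' ⊆ A ∧ S'.card = s' ∧ T'.card = t' ∧
        S ∩ S' = ∅ ∧ T ∩ T' = ∅ ∧ S' ∩ T' = ∅) ↔
      ((S ∩ T).card + s' + t' ≤ A.card ∧ S.card + s' ≤ A.card ∧ T.card + t' ≤ A.card) := by
  constructor
  · rintro ⟨S', T', hS'A, hT'A, hs, ht, h1, h2, h3⟩
    have dSS' : Disjoint S S' := Finset.disjoint_iff_inter_eq_empty.mpr h1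
    have dTT' : Disjoint T T' := Finset.disjoint_iff_inter_eq_empty.mpr h2
    have dS'T' : Disjoint S' T' := Finset.disjoint_iff_inter_eq_empty.mpr h3
    have dI : Disjoint (S ∩ T) S' := dSS'.mono_left Finset.inter_subset_left
    have dI2 : Disjoint (S ∩ T ∪ S') T' :=
      Finset.disjoint_union_left.mpr ⟨dTT'.mono_left Finset.inter_subset_right, dS'T'⟩
    refine ⟨?_, ?_, ?_⟩
    · have hsub : (S ∩ T) ∪ S' ∪ T' ⊆ A := by
        intro x hx
        simp only [Finset.mem_union, Finset.mem_inter] at hx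
        rcases hx with (⟨h, _⟩ | h) | h
        · exact hS h
        · exact hS'A h
        · exact hT'A h
      have := Finset.card_le_card hsub
      rwa [Finset.card_union_of_disjoint dI2, Finset.card_union_of_disjoint dI, hs, ht] at this
    · have hsub : S ∪ S' ⊆ A := Finset.union_subset hS hS'A
      have := Finset.card_le_card hsub
      rwa [Finset.card_union_of_disjoint dSS', hs] at this
    · have hsub : T ∪ T' ⊆ A := Finset.union_subset hT hT'A
      have := Finset.card_le_card hsub
      rwa [Finset.card_union_of_disjoint dTT', ht] at this
  · rintro ⟨h1, h2, h3⟩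
    set a := A.card
    set s := S.card
    set t := T.card
    set i := (S ∩ T).card with hi
    have hst : (S ∪ T).card + i = s + t := Finset.card_union_add_card_inter S T
    have hstA : S ∪ T ⊆ A := Finset.union_subset hS hT
    have hstc : (S ∪ T).card ≤ a := Finset.card_le_card hstA
    have hsd : (S \ T).card + i = s := Finset.card_sdiff_add_card_inter S T
    have hcompST : (A \ (S ∪ T)).card = a - (S ∪ T).card := Finset.card_sdiff_of_subset hstA
    set k := min t' (S \ T).card with hk
    -- pick T1 ⊆ S \ T of size k
    obtain ⟨T1, hT1sub, hT1card⟩ := Finset.exists_subset_card_eq (s := S \ T) (n := k) (min_le_right _ _)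
    -- pick T2 ⊆ A \ (S ∪ T) of size t' - k
    have hroom : t' - k ≤ (A \ (S ∪ T)).card := by
      rw [hcompST]
      omega
    obtain ⟨T2, hT2sub, hT2card⟩ := Finset.exists_subset_card_eq (s := A \ (S ∪ T)) (n := t' - k) hroom
    set T' := T1 ∪ T2 with hT'
    have hT1S : T1 ⊆ S := hT1sub.trans Finset.sdiff_subset
    have hT2S : Disjoint S T2 := by
      refine Finset.disjoint_left.mpr fun x hx hx2 => ?_
      have := hT2sub hx2
      simp only [Finset.mem_sdiff, Finset.mem_union] at this
      exact this.2 (Or.inl hx)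
    have hT2T : Disjoint T T2 := by
      refine Finset.disjoint_left.mpr fun x hx hx2 => ?_
      have := hT2sub hx2
      simp only [Finset.mem_sdiff, Finset.mem_union] at this
      exact this.2 (Or.inr hx)
    have dT12 : Disjoint T1 T2 := hT2S.mono_left hT1S |>.symm.symm
    have hT'card : T'.card = t' := by
      rw [hT', Finset.card_union_of_disjoint dT12, hT1card, hT2card]
      omega
    have hT'A : T' ⊆ A := by
      refine Finset.union_subset (fun x hx => hS (hT1S hx)) fun x hx => ?_
      exact (Finset.sdiff_subset (hT2sub hx))
    have hTT' : T ∩ T' = ∅ := by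
      apply Finset.disjoint_iff_inter_eq_empty.mp
      refine Finset.disjoint_union_right.mpr ⟨?_, hT2T⟩
      refine Finset.disjoint_left.mpr fun x hx hx1 => ?_
      exact (Finset.mem_sdiff.mp (hT1sub hx1)).2 hx
    -- S ∩ T' = T1
    have hST' : S ∩ T' = T1 := by
      rw [hT', Finset.inter_union_distrib_left]
      rw [Finset.inter_eq_right.mpr hT1S, Finset.disjoint_iff_inter_eq_empty.mp hT2S,
        Finset.union_empty]
    have hunion : (S ∪ T').card + k = s + t' := by
      have := Finset.card_union_add_card_inter S T'
      rwa [hST', hT1card, hT'card] at this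
    have hSTA' : S ∪ T' ⊆ A := Finset.union_subset hS hT'A
    have hcomp : (A \ (S ∪ T')).card = a - (S ∪ T').card := Finset.card_sdiff_of_subset hSTA'
    have hroom2 : s' ≤ (A \ (S ∪ T')).card := by
      rw [hcomp]
      omega
    obtain ⟨S', hS'sub, hS'card⟩ := Finset.exists_subset_card_eq (s := A \ (S ∪ T')) (n := s') hroom2
    refine ⟨S', T', fun x hx => (Finset.mem_sdiff.mp (hS'sub hx)).1, hT'A, hS'card, hT'card,
      ?_, hTT', ?_⟩
    · apply Finset.disjoint_iff_inter_eq_empty.mp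
      refine Finset.disjoint_left.mpr fun x hx hx1 => ?_
      have := Finset.mem_sdiff.mp (hS'sub hx1)
      exact this.2 (Finset.mem_union_left _ hx)
    · apply Finset.disjoint_iff_inter_eq_empty.mp
      refine Finset.disjoint_left.mpr fun x hx hx1 => ?_
      have := Finset.mem_sdiff.mp (hS'sub hx)
      exact this.2 (Finset.mem_union_right _ hx1)
end

section
/- Suppose u < m and there exists an m-cycle decomposition of (λ+μ)K_{v+u} − λK_v. Then ⌊((λ+μ)·C(u,2))/(u−1)⌋·(m−u+1) + ε·(m−(u−1)/2) ≤ μ·C(v,2) + vu(λ+μ), where ε = 0 if u(λ+μ) is even and ε = 1 if u(λ+μ) is odd. -/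
open Finset

section Helpers

lemma my_card_eq_sum_count {α : Type*} [Fintype α] [DecidableEq α] (M : Multiset α) :
    Multiset.card M = ∑ a : α, M.count a := by
  rw [← Multiset.toFinset_sum_count_eq M]
  exact Finset.sum_subset (Finset.subset_univ _)
    (fun x _ hx => Multiset.count_eq_zero.2 (by simpa using hx))

lemma my_two_mul_sum_sym2 {α : Type*} [Fintype α] [DecidableEq α] (f : Sym2 α → ℕ)
    (hf : ∀ a, f s(a, a) = 0) :
    2 * ∑ e : Sym2 α, f e = ∑ p : α × α, f (Sym2.mk.uncurry p) := by
  rw [← Finset.sum_fiberwise' (univ : Finset (α × α)) Sym2.mk.uncurry f]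
  rw [Finset.mul_sum]
  refine Finset.sum_congr rfl fun e _ => ?_
  induction e using Sym2.ind with
  | _ x y =>
    rw [Finset.sum_const, smul_eq_mul]
    by_cases hxy : x = y
    · subst hxy; rw [hf x]; ring
    · have hfil : (univ.filter fun p : α × α => Sym2.mk.uncurry p = s(x, y)) = {(x, y), (y, x)} := by
        ext ⟨a, b⟩
        simp only [Finset.mem_filter, Finset.mem_univ, true_and, Finset.mem_insert,
          Finset.mem_singleton, Function.uncurry_apply_pair, Sym2.eq_iff, Prod.mk.injEq]
      rw [hfil, Finset.card_pair (by simp [hxy])]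

lemma my_filter_sum {α : Type*} (p : α → Prop) [DecidablePred p] (s : Multiset (Multiset α)) :
    s.sum.filter p = (s.map (Multiset.filter p)).sum := by
  induction s using Multiset.induction with
  | empty => simp
  | cons a s ih => simp [Multiset.filter_add, ih]

lemma my_card_msum {α : Type*} (s : Multiset (Multiset α)) :
    Multiset.card s.sum = (s.map Multiset.card).sum := by
  induction s using Multiset.induction with
  | empty => simp
  | cons a s ih => simp [ih]

open Fin.NatCast Fin.CommRing in
lemma rot_invariant {k : ℕ} (B : Finset (Fin (k + 1))) (h : ∀ i ∈ B, i + 1 ∈ B)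
    (hne : B.Nonempty) : B = Finset.univ := by
  obtain ⟨i0, hi0⟩ := hne
  have key : ∀ j : ℕ, i0 + (j : Fin (k + 1)) ∈ B := by
    intro j
    induction j with
    | zero => simpa using hi0
    | succ j ih =>
      have h2 := h _ ih
      have : i0 + ((j : ℕ) + 1 : ℕ) = i0 + (j : ℕ) + 1 := by push_cast; ring
      rwa [this]
  ext j
  simp only [Finset.mem_univ, iff_true]
  have hj := key ((j - i0 : Fin (k + 1)) : ℕ)
  rwa [Fin.cast_val_eq_self, show i0 + (j - i0) = j from by ring] at hj

lemma card_filter_lt_fin (v u : ℕ) :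
    ((Finset.univ : Finset (Fin (v + u))).filter (fun x : Fin (v+u) => (x : ℕ) < v)).card = v := by
  rw [Finset.card_filter]
  rw [Fin.sum_univ_eq_sum_range (fun i => if i < v then 1 else 0)]
  rw [← Finset.card_filter]
  have : (Finset.range (v + u)).filter (fun i => i < v) = Finset.range v := by
    ext x; simp; omega
  rw [this, Finset.card_range]

lemma card_filter_not_lt_fin (v u : ℕ) :
    ((Finset.univ : Finset (Fin (v + u))).filter
      (fun x : Fin (v+u) => ¬ (x : ℕ) < v)).card = u := by
  have h := Finset.card_filter_add_card_filter_not
    (s := (Finset.univ : Finset (Fin (v + u)))) (p := fun x => (x : ℕ) < v)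
  rw [Finset.card_univ, Fintype.card_fin, card_filter_lt_fin] at h
  omega

lemma card_filter_le_fin (v u : ℕ) :
    ((Finset.univ : Finset (Fin (v + u))).filter
      (fun x : Fin (v+u) => v ≤ (x : ℕ))).card = u := by
  have h : (Finset.univ : Finset (Fin (v + u))).filter (fun x : Fin (v+u) => v ≤ (x : ℕ))
      = (Finset.univ : Finset (Fin (v + u))).filter (fun x : Fin (v+u) => ¬ (x : ℕ) < v) :=
    Finset.filter_congr (fun x _ => by simp [not_lt])
  rw [h, card_filter_not_lt_fin]

lemma cycle_filter_bound {v u m : ℕ} (hu : 2 ≤ u) (hum : u < m)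
    (c : Fin m → Fin (v + u)) (hc : Function.Injective c) :
    ((Finset.univ : Finset (Fin m)).filter
      (fun i => v ≤ (c i : ℕ) ∧ v ≤ (c (finRotate m i) : ℕ))).card ≤ u - 1 := by
  obtain ⟨k, rfl⟩ : ∃ k, m = k + 1 := ⟨m - 1, by omega⟩
  set B : Finset (Fin (k + 1)) := Finset.univ.filter (fun i => v ≤ (c i : ℕ)) with hB
  have hFsub : (Finset.univ : Finset (Fin (k + 1))).filter
      (fun i => v ≤ (c i : ℕ) ∧ v ≤ (c (finRotate (k + 1) i) : ℕ)) ⊆ B := by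
    intro i hi
    simp only [hB, Finset.mem_filter] at hi ⊢
    exact ⟨hi.1, hi.2.1⟩
  have hBcard : B.card ≤ u := by
    have h1 : B.card = (B.image c).card := (Finset.card_image_of_injective _ hc).symm
    have h2 : B.image c ⊆ Finset.univ.filter (fun x : Fin (v + u) => v ≤ (x : ℕ)) := by
      intro x hx
      simp only [Finset.mem_image, hB, Finset.mem_filter, Finset.mem_univ, true_and] at hx ⊢
      obtain ⟨i, hi, rfl⟩ := hx
      exact hi
    have h3 := Finset.card_le_card h2
    rw [card_filter_le_fin v u] at h3
    omega
  by_cases hlt : B.card ≤ u - 1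
  · exact le_trans (Finset.card_le_card hFsub) hlt
  · have hBu : B.card = u := by omega
    have hninv : ¬ (∀ i ∈ B, i + 1 ∈ B) := by
      intro hinv
      have huniv := rot_invariant B hinv (Finset.card_pos.1 (by omega))
      have : B.card = k + 1 := by rw [huniv, Finset.card_univ, Fintype.card_fin]
      omega
    push_neg at hninv
    obtain ⟨i, hiB, hiN⟩ := hninv
    have hsub2 : (Finset.univ : Finset (Fin (k + 1))).filter
        (fun j => v ≤ (c j : ℕ) ∧ v ≤ (c (finRotate (k + 1) j) : ℕ)) ⊆ B.erase i := by
      intro j hj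
      rw [Finset.mem_erase]
      refine ⟨?_, hFsub hj⟩
      rintro rfl
      simp only [Finset.mem_filter, Finset.mem_univ, true_and, finRotate_succ_apply] at hj
      exact hiN (by simp [hB, hj.2])
    calc _ ≤ (B.erase i).card := Finset.card_le_card hsub2
      _ = u - 1 := by rw [Finset.card_erase_of_mem hiB, hBu]

end Helpers

/-- Multiset of edges of the closed walk (cycle) given by `c : Fin n → V`. -/
def cycleEdges {V : Type*} {n : ℕ} (c : Fin n → V) : Multiset (Sym2 V) :=
  Finset.univ.val.map fun i : Fin n => s(c i, c (finRotate n i))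

/-- `D` is a decomposition of the multigraph with edge-multiplicity function `G`
into cycles of length `m`. -/
def IsCycleDecomp {V : Type*} [DecidableEq V] (m : ℕ) (G : Sym2 V → ℕ)
    (D : Multiset (Fin m → V)) : Prop :=
  (∀ c ∈ D, Function.Injective c) ∧
    ∀ e : Sym2 V, ((D.map cycleEdges).sum).count e = G e

/-- The multigraph `(λ+μ)K_{v+u} − λK_v`: multiplicity `μ` between two vertices of the
distinguished `v`-set (the first `v` vertices of `Fin (v+u)`), and `λ+μ` otherwise. -/
def mixedComplete (lam mu v u : ℕ) : Sym2 (Fin (v + u)) → ℕ :=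
  Sym2.lift ⟨fun x y => if x = y then 0 else if (x : ℕ) < v ∧ (y : ℕ) < v then mu else lam + mu,
    fun x y => if_congr eq_comm rfl (if_congr and_comm rfl rfl)⟩

lemma mixedComplete_mk (lam mu v u : ℕ) (x y : Fin (v + u)) :
    mixedComplete lam mu v u s(x, y) =
      if x = y then 0 else if (x : ℕ) < v ∧ (y : ℕ) < v then mu else lam + mu := rfl

section InU

/-- the predicate "both endpoints are in `U`". -/
def inU (v : ℕ) {n : ℕ} (e : Sym2 (Fin n)) : Prop := ∀ x ∈ e, v ≤ (x : ℕ)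

instance inU_decidable (v n : ℕ) : DecidablePred (inU v (n := n)) := fun e => by
  unfold inU; infer_instance

lemma inU_mk (v : ℕ) {n : ℕ} (x y : Fin n) :
    inU v s(x, y) ↔ v ≤ (x : ℕ) ∧ v ≤ (y : ℕ) := by
  constructor
  · intro h; exact ⟨h x (by simp), h y (by simp)⟩
  · rintro ⟨h1, h2⟩ z hz
    rcases Sym2.mem_iff.1 hz with rfl | rfl <;> assumption

end InU

section PairSums

lemma sum_offdiag_const {β : Type*} [DecidableEq β] (s : Finset β) (x : β) (hx : x ∈ s)
    (cst : ℕ) : ∑ y ∈ s, (if x = y then 0 else cst) = (s.card - 1) * cst := by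
  have h0 : ∑ y ∈ s, (if x = y then 0 else cst) + ∑ y ∈ s, (if x = y then cst else 0)
      = s.card * cst := by
    rw [← Finset.sum_add_distrib,
      Finset.sum_congr rfl (fun y _ => by split_ifs <;> simp : ∀ y ∈ s,
        ((if x = y then 0 else cst) + if x = y then cst else 0) = cst)]
    simp [mul_comm]
  rw [Finset.sum_ite_eq s x (fun _ => cst), if_pos hx] at h0
  have e : (s.card - 1) * cst + cst = s.card * cst := by
    obtain ⟨k, hk⟩ : ∃ k, s.card = k + 1 :=
      ⟨s.card - 1, by have := Finset.card_pos.2 ⟨x, hx⟩; omega⟩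
    rw [hk]; simp [Nat.add_mul]
  linarith [h0, e]

lemma pair_sum_A (lam mu v u : ℕ) :
    ∑ p : Fin (v + u) × Fin (v + u),
      (if v ≤ (p.1 : ℕ) ∧ v ≤ (p.2 : ℕ) then mixedComplete lam mu v u s(p.1, p.2) else 0)
    = u * ((u - 1) * (lam + mu)) := by
  rw [Fintype.sum_prod_type]
  rw [← Finset.sum_filter_add_sum_filter_not univ (fun x : Fin (v+u) => (x : ℕ) < v)]
  have h1 : ∀ x ∈ (univ : Finset (Fin (v+u))).filter (fun x : Fin (v+u) => (x : ℕ) < v),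
      (∑ y : Fin (v+u), if v ≤ (x : ℕ) ∧ v ≤ (y : ℕ) then mixedComplete lam mu v u s(x, y) else 0)
        = 0 := by
    intro x hx
    apply Finset.sum_eq_zero
    intro y _
    simp only [Finset.mem_filter] at hx
    rw [if_neg (by omega)]
  rw [Finset.sum_congr rfl h1, Finset.sum_const_nat (fun _ _ => rfl), mul_zero, zero_add]
  have h2 : ∀ x ∈ (univ : Finset (Fin (v+u))).filter (fun x : Fin (v+u) => ¬ (x : ℕ) < v),
      (∑ y : Fin (v+u), if v ≤ (x : ℕ) ∧ v ≤ (y : ℕ) then mixedComplete lam mu v u s(x, y) else 0)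
        = (u - 1) * (lam + mu) := by
    intro x hx
    simp only [Finset.mem_filter, Finset.mem_univ, true_and] at hx
    rw [← Finset.sum_filter_add_sum_filter_not univ (fun y : Fin (v+u) => (y : ℕ) < v)]
    have hz : ∀ y ∈ (univ : Finset (Fin (v+u))).filter (fun y : Fin (v+u) => (y : ℕ) < v),
        (if v ≤ (x : ℕ) ∧ v ≤ (y : ℕ) then mixedComplete lam mu v u s(x, y) else 0) = 0 := by
      intro y hy
      simp only [Finset.mem_filter] at hy
      rw [if_neg (by omega)]
    rw [Finset.sum_congr rfl hz, Finset.sum_const_nat (fun _ _ => rfl), mul_zero, zero_add]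
    have hc : ∀ y ∈ (univ : Finset (Fin (v+u))).filter (fun y : Fin (v+u) => ¬ (y : ℕ) < v),
        (if v ≤ (x : ℕ) ∧ v ≤ (y : ℕ) then mixedComplete lam mu v u s(x, y) else 0)
          = (if x = y then 0 else (lam + mu)) := by
      intro y hy
      simp only [Finset.mem_filter, Finset.mem_univ, true_and] at hy
      rw [if_pos (show v ≤ (x:ℕ) ∧ v ≤ (y:ℕ) from ⟨by omega, by omega⟩), mixedComplete_mk]
      by_cases hxy : x = y
      · simp [hxy]
      · simp [hxy, show ¬((x:ℕ) < v ∧ (y:ℕ) < v) from by omega]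
    rw [Finset.sum_congr rfl hc, sum_offdiag_const _ x
      (by simp only [Finset.mem_filter, Finset.mem_univ, true_and]; exact hx) _,
      card_filter_not_lt_fin]
  rw [Finset.sum_congr rfl h2, Finset.sum_const, card_filter_not_lt_fin, smul_eq_mul]

lemma pair_sum_S (lam mu v u : ℕ) :
    ∑ p : Fin (v + u) × Fin (v + u),
      (if v ≤ (p.1 : ℕ) ∧ v ≤ (p.2 : ℕ) then 0 else mixedComplete lam mu v u s(p.1, p.2))
    = v * ((v - 1) * mu + u * (lam + mu)) + u * (v * (lam + mu)) := by
  rw [Fintype.sum_prod_type]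
  rw [← Finset.sum_filter_add_sum_filter_not univ (fun x : Fin (v+u) => (x : ℕ) < v)]
  have h1 : ∀ x ∈ (univ : Finset (Fin (v+u))).filter (fun x : Fin (v+u) => (x : ℕ) < v),
      (∑ y : Fin (v+u), if v ≤ (x : ℕ) ∧ v ≤ (y : ℕ) then 0 else mixedComplete lam mu v u s(x, y))
        = (v - 1) * mu + u * (lam + mu) := by
    intro x hx
    simp only [Finset.mem_filter, Finset.mem_univ, true_and] at hx
    rw [← Finset.sum_filter_add_sum_filter_not univ (fun y : Fin (v+u) => (y : ℕ) < v)]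
    have ha : ∀ y ∈ (univ : Finset (Fin (v+u))).filter (fun y : Fin (v+u) => (y : ℕ) < v),
        (if v ≤ (x : ℕ) ∧ v ≤ (y : ℕ) then 0 else mixedComplete lam mu v u s(x, y))
          = (if x = y then 0 else mu) := by
      intro y hy
      simp only [Finset.mem_filter, Finset.mem_univ, true_and] at hy
      rw [if_neg (show ¬(v ≤ (x:ℕ) ∧ v ≤ (y:ℕ)) from by omega), mixedComplete_mk]
      by_cases hxy : x = y
      · simp [hxy]
      · simp [hxy, show (x:ℕ) < v ∧ (y:ℕ) < v from ⟨hx, hy⟩]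
    have hb : ∀ y ∈ (univ : Finset (Fin (v+u))).filter (fun y : Fin (v+u) => ¬ (y : ℕ) < v),
        (if v ≤ (x : ℕ) ∧ v ≤ (y : ℕ) then 0 else mixedComplete lam mu v u s(x, y))
          = lam + mu := by
      intro y hy
      simp only [Finset.mem_filter, Finset.mem_univ, true_and] at hy
      have hne : x ≠ y := fun h => by
        have := congrArg Fin.val h
        omega
      rw [if_neg (show ¬(v ≤ (x:ℕ) ∧ v ≤ (y:ℕ)) from by omega), mixedComplete_mk,
        if_neg hne, if_neg (show ¬((x:ℕ) < v ∧ (y:ℕ) < v) from by omega)]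
    rw [Finset.sum_congr rfl ha, Finset.sum_congr rfl hb,
      sum_offdiag_const _ x
        (by simp only [Finset.mem_filter, Finset.mem_univ, true_and]; exact hx) _,
      card_filter_lt_fin,
      Finset.sum_const, card_filter_not_lt_fin, smul_eq_mul]
  have h2 : ∀ x ∈ (univ : Finset (Fin (v+u))).filter (fun x : Fin (v+u) => ¬ (x : ℕ) < v),
      (∑ y : Fin (v+u), if v ≤ (x : ℕ) ∧ v ≤ (y : ℕ) then 0 else mixedComplete lam mu v u s(x, y))
        = v * (lam + mu) := by
    intro x hx
    simp only [Finset.mem_filter, Finset.mem_univ, true_and] at hx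
    rw [← Finset.sum_filter_add_sum_filter_not univ (fun y : Fin (v+u) => (y : ℕ) < v)]
    have ha : ∀ y ∈ (univ : Finset (Fin (v+u))).filter (fun y : Fin (v+u) => (y : ℕ) < v),
        (if v ≤ (x : ℕ) ∧ v ≤ (y : ℕ) then 0 else mixedComplete lam mu v u s(x, y))
          = lam + mu := by
      intro y hy
      simp only [Finset.mem_filter, Finset.mem_univ, true_and] at hy
      have hne : x ≠ y := fun h => by
        have := congrArg Fin.val h
        omega
      rw [if_neg (show ¬(v ≤ (x:ℕ) ∧ v ≤ (y:ℕ)) from by omega), mixedComplete_mk,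
        if_neg hne, if_neg (show ¬((x:ℕ) < v ∧ (y:ℕ) < v) from by omega)]
    have hb : ∀ y ∈ (univ : Finset (Fin (v+u))).filter (fun y : Fin (v+u) => ¬ (y : ℕ) < v),
        (if v ≤ (x : ℕ) ∧ v ≤ (y : ℕ) then 0 else mixedComplete lam mu v u s(x, y))
          = 0 := by
      intro y hy
      simp only [Finset.mem_filter, Finset.mem_univ, true_and] at hy
      rw [if_pos (by omega)]
    rw [Finset.sum_congr rfl ha, Finset.sum_congr rfl hb,
      Finset.sum_const, card_filter_lt_fin, smul_eq_mul,
      Finset.sum_const_nat (fun _ _ => rfl), mul_zero, add_zero]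
  rw [Finset.sum_congr rfl h1, Finset.sum_congr rfl h2, Finset.sum_const, Finset.sum_const,
    card_filter_lt_fin, card_filter_not_lt_fin, smul_eq_mul, smul_eq_mul]

end PairSums

/-- Necessary condition (d): the counting bound when `u < m`. -/
theorem necessary_d (lam mu v u m : ℕ) (hlam : 0 < lam) (hmu : 0 < mu)
    (hv : 0 < v) (hu : 2 ≤ u) (hm : 2 < m) (hum : u < m)
    (D : Multiset (Fin m → Fin (v + u)))
    (hD : IsCycleDecomp m (mixedComplete lam mu v u) D)
    (eps : ℕ) (heps : eps = if u * (lam + mu) % 2 = 0 then 0 else 1) :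
    ((lam + mu) * Nat.choose u 2) / (u - 1) * (m - u + 1) + eps * (m - (u - 1) / 2) ≤
      mu * Nat.choose v 2 + v * u * (lam + mu) := by
  obtain ⟨hDinj, hcount⟩ := hD
  set G := mixedComplete lam mu v u with hG
  set M : Multiset (Sym2 (Fin (v + u))) := (D.map cycleEdges).sum with hM
  set t := Multiset.card D with ht
  set A' := Multiset.card (M.filter (inU v)) with hA'
  set S' := Multiset.card (M.filter (fun e => ¬ inU v e)) with hS'
  -- (1) A' + S' = card M = t * m
  have hAS : A' + S' = t * m := by
    rw [hA', hS', ← Multiset.card_add, Multiset.filter_add_not, hM, my_card_msum,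
      Multiset.map_map]
    have hmap : D.map (Multiset.card ∘ cycleEdges) = D.map (fun _ => m) :=
      Multiset.map_congr rfl (fun c _ => by
        simp [cycleEdges, Function.comp])
    rw [hmap, Multiset.map_const', Multiset.sum_replicate, smul_eq_mul]
  -- (2) A' as a sum over edges
  have hA'sum : A' = ∑ e : Sym2 (Fin (v + u)), if inU v e then G e else 0 := by
    rw [hA', my_card_eq_sum_count]
    refine Finset.sum_congr rfl fun e _ => ?_
    rw [Multiset.count_filter]
    by_cases h : inU v e
    · simp [h, hcount e]
    · simp [h]
  have hS'sum : S' = ∑ e : Sym2 (Fin (v + u)), if inU v e then 0 else G e := by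
    rw [hS', my_card_eq_sum_count]
    refine Finset.sum_congr rfl fun e _ => ?_
    rw [Multiset.count_filter]
    by_cases h : inU v e
    · simp [h]
    · simp [h, hcount e]
  -- (3) 2 * A' and 2 * S'
  have h2A : 2 * A' = u * ((u - 1) * (lam + mu)) := by
    rw [hA'sum, my_two_mul_sum_sym2 _ (fun a => by
      rw [hG]; split_ifs <;> simp [mixedComplete_mk])]
    rw [← pair_sum_A lam mu v u]
    refine Finset.sum_congr rfl fun p _ => ?_
    rcases p with ⟨x, y⟩
    exact if_congr (inU_mk v x y) rfl rfl
  have h2S : 2 * S' = v * ((v - 1) * mu + u * (lam + mu)) + u * (v * (lam + mu)) := by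
    rw [hS'sum, my_two_mul_sum_sym2 _ (fun a => by
      rw [hG]; split_ifs <;> simp [mixedComplete_mk])]
    rw [← pair_sum_S lam mu v u]
    refine Finset.sum_congr rfl fun p _ => ?_
    rcases p with ⟨x, y⟩
    exact if_congr (inU_mk v x y) rfl rfl
  -- (4) the per-cycle bound
  have hbound : A' ≤ t * (u - 1) := by
    rw [hA', hM, my_filter_sum, Multiset.map_map]
    have hle : ∀ c ∈ D, Multiset.card ((Multiset.filter (inU v) ∘ cycleEdges) c) ≤ u - 1 := by
      intro c hc
      have hinj := hDinj c hc
      simp only [Function.comp, cycleEdges, Multiset.filter_map, Multiset.card_map]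
      have : Multiset.filter (fun i : Fin m => inU v s(c i, c (finRotate m i)))
            Finset.univ.val
          = (Finset.univ.filter
              (fun i : Fin m => v ≤ (c i : ℕ) ∧ v ≤ (c (finRotate m i) : ℕ))).val := by
        rw [Finset.filter_val]
        apply Multiset.filter_congr
        intro i _
        exact inU_mk v _ _
      rw [this]
      exact cycle_filter_bound hu hum c hinj
    calc Multiset.card ((D.map (Multiset.filter (inU v) ∘ cycleEdges)).sum)
        = (D.map (Multiset.card ∘ (Multiset.filter (inU v) ∘ cycleEdges))).sum := by
          rw [my_card_msum, Multiset.map_map]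
      _ ≤ (D.map (fun _ => u - 1)).sum := by
          apply Multiset.sum_map_le_sum_map
          exact hle
      _ = t * (u - 1) := by
          rw [Multiset.map_const', Multiset.sum_replicate, smul_eq_mul, ht]
  -- (5) arithmetic: identify the RHS with S'
  have hS'val : S' = mu * Nat.choose v 2 + v * u * (lam + mu) := by
    have hch : 2 * Nat.choose v 2 = v * (v - 1) := by
      rw [Nat.choose_two_right]
      rw [Nat.mul_div_cancel' ?_]
      · rcases Nat.eq_zero_or_pos v with h | h
        · subst h; simp
        · obtain ⟨k, rfl⟩ : ∃ k, v = k + 1 := ⟨v - 1, by omega⟩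
          simpa [mul_comm] using (Nat.even_mul_succ_self k).two_dvd
    have : 2 * S' = 2 * (mu * Nat.choose v 2 + v * u * (lam + mu)) := by
      rw [h2S]
      have : 2 * (mu * Nat.choose v 2) = mu * (v * (v - 1)) := by
        rw [← hch]; ring
      nlinarith [this]
    omega
  -- (6) identify the LHS numerator with A'
  have hA'val : A' = (lam + mu) * Nat.choose u 2 := by
    have hch : 2 * Nat.choose u 2 = u * (u - 1) := by
      rw [Nat.choose_two_right]
      rw [Nat.mul_div_cancel' ?_]
      obtain ⟨k, rfl⟩ : ∃ k, u = k + 1 := ⟨u - 1, by omega⟩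
      simpa [mul_comm] using (Nat.even_mul_succ_self k).two_dvd
    have h2 : 2 * A' = 2 * ((lam + mu) * Nat.choose u 2) := by
      rw [h2A]
      have : 2 * ((lam + mu) * Nat.choose u 2) = (lam + mu) * (u * (u - 1)) := by
        rw [← hch]; ring
      rw [this]; ring
    omega
  rw [← hA'val, ← hS'val]
  -- (7) final arithmetic
  by_cases hpar : u * (lam + mu) % 2 = 0
  · -- even case
    rw [heps, if_pos hpar]
    set w := u * (lam + mu) / 2 with hw
    have hw2 : 2 * w = u * (lam + mu) := by omega
    have hXw : A' = (u - 1) * w := by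
      have : 2 * A' = 2 * ((u - 1) * w) := by
        rw [h2A]
        calc u * ((u - 1) * (lam + mu)) = (u - 1) * (u * (lam + mu)) := by ring
          _ = (u - 1) * (2 * w) := by rw [hw2]
          _ = 2 * ((u - 1) * w) := by ring
      omega
    have hq : A' / (u - 1) = w := by
      rw [hXw, Nat.mul_div_cancel_left _ (by omega : 0 < u - 1)]
    rw [hq]
    have hwt : w ≤ t := by
      have := hbound
      rw [hXw] at this
      exact Nat.le_of_mul_le_mul_right (by
        calc w * (u - 1) = (u - 1) * w := mul_comm _ _
          _ ≤ t * (u - 1) := this) (by omega)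
    have hkey : w * (m - u + 1) + (u - 1) * w ≤ t * m := by
      have h1 : w * (m - u + 1) + (u - 1) * w = w * m := by
        have : m - u + 1 = m - (u - 1) := by omega
        rw [this, mul_comm (u-1) w, ← Nat.mul_add, Nat.sub_add_cancel (by omega)]
      rw [h1]
      exact Nat.mul_le_mul_right m hwt
    rw [← hXw] at hkey
    omega
  · -- odd case
    rw [heps, if_neg hpar]
    have hodd : u % 2 = 1 := by
      rcases Nat.even_or_odd u with h | h
      · exfalso
        obtain ⟨k, hk⟩ := h
        apply hpar
        have he2 : u * (lam + mu) = 2 * (k * (lam + mu)) := by rw [hk]; ring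
        omega
      · obtain ⟨k, hk⟩ := h
        omega
    set w := (u * (lam + mu) - 1) / 2 with hw
    have hw2 : u * (lam + mu) = 2 * w + 1 := by omega
    set r := (u - 1) / 2 with hr
    have hr2 : u - 1 = 2 * r := by omega
    have hrpos : 1 ≤ r := by omega
    have hXw : A' = (u - 1) * w + r := by
      have : 2 * A' = 2 * ((u - 1) * w + r) := by
        rw [h2A]
        calc u * ((u - 1) * (lam + mu)) = (u - 1) * (u * (lam + mu)) := by ring
          _ = (u - 1) * (2 * w + 1) := by rw [hw2]
          _ = 2 * ((u - 1) * w) + (u - 1) := by ring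
          _ = 2 * ((u - 1) * w + r) := by omega
      omega
    have hq : A' / (u - 1) = w := by
      rw [hXw, mul_comm (u - 1) w, add_comm, Nat.add_mul_div_right _ _ (by omega : 0 < u - 1)]
      rw [Nat.div_eq_of_lt (by omega)]
      omega
    rw [hq]
    have hwt : w + 1 ≤ t := by
      by_contra hcon
      push_neg at hcon
      have htw : t ≤ w := by omega
      have h6 : t * (u - 1) ≤ w * (u - 1) := Nat.mul_le_mul_right _ htw
      have h7 : w * (u - 1) = (u - 1) * w := mul_comm _ _
      omega
    have hkey : w * (m - u + 1) + 1 * (m - r) + ((u - 1) * w + r) ≤ t * m := by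
      have h1 : w * (m - u + 1) + (u - 1) * w = w * m := by
        have : m - u + 1 = m - (u - 1) := by omega
        rw [this, mul_comm (u-1) w, ← Nat.mul_add, Nat.sub_add_cancel (by omega)]
      have h2 : 1 * (m - r) + r = m := by
        have : r < m := by omega
        omega
      have h3 : w * m + m = (w + 1) * m := by ring
      have h4 : (w + 1) * m ≤ t * m := Nat.mul_le_mul_right m hwt
      omega
    rw [← hXw] at hkey
    omega
end
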